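/- Let N ≥ 2 be an integer and let c ≥ 2N² + 1. Let (v_j) ⊂ E_N, a_j ∈ (0,1], δ_j ∈ (0,1) with a_j → 0 and δ_j → 0, such that max_{s∈(0,1]} |v_j(s)|^N/s^{N−1} = |v_j(a_j)|^N/a_j^{N−1} = 1 − δ_j for every j. Fix ν > 0 sufficiently small and let k_j(ν) be the smallest integer with k_j(ν)·c·δ_j ≥ ν, and set I_j^k = [ a_j(1 − (k+1)cδ_j), a_j(1 − kcδ_j) ]. Then for all sufficiently large j, for every k = 1, 2, …, k_j(ν) − 1 and every s ∈ I_j^k one has |v_j(s)|^N / s^{N−1} ≤ 1 − k·δ_j. -/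

import Mathlib

open MeasureTheory Real Set Filter

/-- `u` belongs to `E_N` with weak derivative `g`. -/
def MemEN (N : ℕ) (u g : ℝ → ℝ) : Prop :=
  (∀ s ∈ Set.Icc (0:ℝ) 1, u s = ∫ t in (0:ℝ)..s, g t) ∧
  u 0 = 0 ∧
  IntervalIntegrable g MeasureTheory.volume 0 1 ∧
  MeasureTheory.IntegrableOn (fun t => |g t| ^ N) (Set.Ioc (0:ℝ) 1) ∧
  (∫ t in Set.Ioc (0:ℝ) 1, |g t| ^ N) = 1


lemma holder_aux (N : ℕ) (hN : 2 ≤ N) (g : ℝ → ℝ) (s t : ℝ) (hst : s ≤ t)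
    (hg : MeasureTheory.IntegrableOn g (Set.Ioc s t))
    (hgN : MeasureTheory.IntegrableOn (fun x => |g x| ^ N) (Set.Ioc s t)) :
    |∫ x in Set.Ioc s t, g x| ^ N ≤ (∫ x in Set.Ioc s t, |g x| ^ N) * (t - s) ^ (N - 1) := by
  have hN1 : (1:ℝ) < N := by exact_mod_cast Nat.lt_of_lt_of_le Nat.one_lt_two hN
  set μ := volume.restrict (Set.Ioc s t) with hμ
  haveI : IsFiniteMeasure μ := by
    constructor
    rw [hμ, Measure.restrict_apply_univ]
    exact measure_Ioc_lt_top
  have hpq : ((N:ℝ)).HolderConjugate (Real.conjExponent N) :=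
    Real.HolderConjugate.conjExponent hN1
  have hmg : AEStronglyMeasurable g μ := hg.aestronglyMeasurable
  -- Memℒp of |g| with exponent N
  have hmem : MemLp (fun x => |g x|) (ENNReal.ofReal (N:ℝ)) μ := by
    have h1 : MemLp (fun x => ‖g x‖ ^ ((N : ENNReal)).toReal) 1 μ := by
      rw [memLp_one_iff_integrable]
      have : (fun x => ‖g x‖ ^ ((N : ENNReal)).toReal) = fun x => |g x| ^ N := by
        ext x
        simp [Real.rpow_natCast, Real.norm_eq_abs]
      rw [this]
      exact hgN
    have hNne : (N : ENNReal) ≠ 0 := by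
      simp only [ne_eq, Nat.cast_eq_zero]; omega
    have hNnt : (N : ENNReal) ≠ ⊤ := ENNReal.natCast_ne_top N
    have h2 : MemLp g (N : ENNReal) μ := by
      have := (memLp_norm_rpow_iff (p := (N : ENNReal)) hmg hNne hNnt)
      rw [ENNReal.div_self hNne hNnt] at this
      exact this.1 h1
    have h3 : MemLp (fun x => |g x|) (N : ENNReal) μ := by
      simpa [Real.norm_eq_abs] using h2.norm
    rwa [ENNReal.ofReal_natCast]
  have hmem1 : MemLp (fun _ : ℝ => (1:ℝ)) (ENNReal.ofReal (Real.conjExponent N)) μ :=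
    memLp_const 1
  have hhold := integral_mul_le_Lp_mul_Lq_of_nonneg (μ := μ) hpq
    (Filter.Eventually.of_forall (fun x => abs_nonneg (g x)))
    (Filter.Eventually.of_forall (fun _ => zero_le_one)) hmem hmem1
  simp only [mul_one, Real.one_rpow, integral_const, smul_eq_mul] at hhold
  -- rewrite pieces
  have hμuniv : (μ Set.univ).toReal = t - s := by
    rw [hμ, Measure.restrict_apply_univ, Real.volume_Ioc, ENNReal.toReal_ofReal (by linarith)]
  rw [show μ.real Set.univ = (μ Set.univ).toReal from rfl, hμuniv] at hhold
  have hXeq : (∫ x, |g x| ^ (N:ℝ) ∂μ) = ∫ x in Set.Ioc s t, |g x| ^ N := by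
    apply integral_congr_ae
    filter_upwards with x
    rw [Real.rpow_natCast]
  rw [hXeq] at hhold
  set X := ∫ x in Set.Ioc s t, |g x| ^ N with hX
  have hX0 : 0 ≤ X := by
    apply integral_nonneg
    intro x
    positivity
  have habs : |∫ x in Set.Ioc s t, g x| ≤ ∫ x, |g x| ∂μ := by
    simpa [Real.norm_eq_abs] using norm_integral_le_integral_norm (μ := μ) g
  have hchain : |∫ x in Set.Ioc s t, g x| ≤ X ^ (1/(N:ℝ)) * (t-s) ^ (1/(Real.conjExponent N)) :=
    le_trans habs hhold
  have hts0 : (0:ℝ) ≤ t - s := by linarith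
  have hRHS0 : 0 ≤ X ^ (1/(N:ℝ)) * (t-s) ^ (1/(Real.conjExponent N)) := by positivity
  have hpow := pow_le_pow_left₀ (abs_nonneg _) hchain N
  refine le_trans hpow (le_of_eq ?_)
  rw [mul_pow]
  have e1 : (X ^ (1/(N:ℝ))) ^ N = X := by
    rw [← Real.rpow_natCast (X ^ (1/(N:ℝ))) N, ← Real.rpow_mul hX0]
    rw [one_div, inv_mul_cancel₀ (by positivity), Real.rpow_one]
  have e2 : ((t-s) ^ (1/(Real.conjExponent N))) ^ N = (t-s) ^ (N-1) := by
    rw [← Real.rpow_natCast ((t-s) ^ (1/(Real.conjExponent N))) N, ← Real.rpow_mul hts0]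
    have : 1/(Real.conjExponent N) * N = ((N - 1 : ℕ) : ℝ) := by
      rw [Real.conjExponent]
      have : ((N - 1 : ℕ) : ℝ) = (N:ℝ) - 1 := by
        have : (1:ℕ) ≤ N := by omega
        push_cast [this]; ring
      rw [this]
      field_simp
    rw [this, Real.rpow_natCast]
  rw [e1, e2]

lemma theta_bound (N : ℕ) (hN : 2 ≤ N) (D : ℝ) (hD : D ≤ 1/2) (c : ℝ)
    (hc : 2 * (N : ℝ) ^ 2 + 1 ≤ c) : 1 < (1 - D) * (1 - 1/(N:ℝ)) ^ N * c := by
  have hN2 : (2:ℝ) ≤ N := by exact_mod_cast hN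
  have hNpos : (0:ℝ) < N := by linarith
  -- Bernoulli: (1 - 1/N)^(N-1) ≥ 1/N
  have hb : 1 + ((N:ℝ) - 1) * (-(1/(N:ℝ))) ≤ (1 + (-(1/(N:ℝ)))) ^ (N - 1) := by
    have h2 : (-2:ℝ) ≤ -(1/(N:ℝ)) := by
      rw [neg_le_neg_iff]
      rw [div_le_iff₀ hNpos]
      linarith
    have := one_add_mul_le_pow h2 (N - 1)
    calc 1 + ((N:ℝ) - 1) * (-(1/(N:ℝ)))
        = 1 + ((N - 1 : ℕ) : ℝ) * (-(1/(N:ℝ))) := by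
          congr 1
          have h1 : (1:ℕ) ≤ N := by omega
          push_cast [h1]; ring
      _ ≤ (1 + (-(1/(N:ℝ)))) ^ (N - 1) := this
  have hθ0 : (0:ℝ) ≤ 1 - 1/(N:ℝ) := by
    rw [sub_nonneg, div_le_one hNpos]; linarith
  have hkey : ((N:ℝ) - 1) / (N:ℝ)^2 ≤ (1 - 1/(N:ℝ)) ^ N := by
    have hsplit : (1 - 1/(N:ℝ)) ^ N = (1 - 1/(N:ℝ)) * (1 - 1/(N:ℝ)) ^ (N - 1) := by
      rw [← pow_succ']
      congr 1
      omega
    rw [hsplit]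
    have hNne : (N:ℝ) ≠ 0 := ne_of_gt hNpos
    have h1 : (1:ℝ)/(N:ℝ) ≤ (1 - 1/(N:ℝ)) ^ (N - 1) := by
      have e : 1 + ((N:ℝ) - 1) * (-(1/(N:ℝ))) = 1/(N:ℝ) := by field_simp; ring
      have e' : 1 + (-(1/(N:ℝ))) = 1 - 1/(N:ℝ) := by ring
      calc (1:ℝ)/(N:ℝ) = 1 + ((N:ℝ) - 1) * (-(1/(N:ℝ))) := e.symm
        _ ≤ (1 + (-(1/(N:ℝ)))) ^ (N - 1) := hb
        _ = (1 - 1/(N:ℝ)) ^ (N - 1) := by rw [e']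
    have h2 : ((N:ℝ) - 1) / (N:ℝ)^2 = (1 - 1/(N:ℝ)) * (1/(N:ℝ)) := by
      field_simp
    rw [h2]
    exact mul_le_mul_of_nonneg_left h1 hθ0
  have hc0 : (0:ℝ) < c := by nlinarith
  calc (1:ℝ) < (1 - D) * (((N:ℝ) - 1) / (N:ℝ)^2) * c := by
        have hN2pos : (0:ℝ) < (N:ℝ)^2 := by positivity
        rw [show (1 - D) * (((N:ℝ) - 1) / (N:ℝ)^2) * c
            = ((1-D)*(((N:ℝ)-1)*c))/(N:ℝ)^2 by ring, lt_div_iff₀ hN2pos]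
        have k1 : 2*(N:ℝ)^2+1 ≤ ((N:ℝ)-1)*c := by nlinarith
        have k2 : (1/2)*(2*(N:ℝ)^2+1) ≤ (1-D)*(((N:ℝ)-1)*c) := by nlinarith
        nlinarith
    _ ≤ (1 - D) * (1 - 1/(N:ℝ)) ^ N * c := by
        apply mul_le_mul_of_nonneg_right _ hc0.le
        apply mul_le_mul_of_nonneg_left hkey (by linarith)

set_option maxHeartbeats 1000000 in
/-- Lemma 4.2: let `c ≥ 2N² + 1`, `v_j ∈ E_N` with concentration data
`a_j → 0`, `δ_j → 0` and `max_{(0,1]} |v_j(s)|^N/s^{N-1} = |v_j(a_j)|^N/a_j^{N-1} = 1 − δ_j`.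
Then for every sufficiently small `ν > 0` and all sufficiently large `j`: for
`k = 1, …, k_j(ν) − 1` (where `k_j(ν) = ⌈ν/(c δ_j)⌉` is the smallest integer with
`k_j(ν) c δ_j ≥ ν`) and `s ∈ I_j^k = [a_j(1 − (k+1)cδ_j), a_j(1 − kcδ_j)]` one has
`|v_j(s)|^N/s^{N-1} ≤ 1 − k δ_j`. -/
theorem decay_left_intervals (N : ℕ) (hN : 2 ≤ N) (c : ℝ) (hc : 2 * (N : ℝ) ^ 2 + 1 ≤ c)
    (v g : ℕ → ℝ → ℝ) (hv : ∀ j, MemEN N (v j) (g j))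
    (a δ : ℕ → ℝ) (ha : ∀ j, a j ∈ Set.Ioc (0:ℝ) 1) (hδ : ∀ j, δ j ∈ Set.Ioo (0:ℝ) 1)
    (ha0 : Filter.Tendsto a Filter.atTop (nhds 0))
    (hδ0 : Filter.Tendsto δ Filter.atTop (nhds 0))
    (hmax : ∀ j, ∀ s ∈ Set.Ioc (0:ℝ) 1, |v j s| ^ N / s ^ (N - 1) ≤ 1 - δ j)
    (heq : ∀ j, |v j (a j)| ^ N / (a j) ^ (N - 1) = 1 - δ j) :
    ∃ ν₀ > (0:ℝ), ∀ ν : ℝ, 0 < ν → ν ≤ ν₀ →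
      ∀ᶠ j : ℕ in Filter.atTop, ∀ k : ℕ, 1 ≤ k → k < ⌈ν / (c * δ j)⌉₊ →
        ∀ s ∈ Set.Icc (a j * (1 - ((k : ℝ) + 1) * c * δ j)) (a j * (1 - (k : ℝ) * c * δ j)),
          |v j s| ^ N / s ^ (N - 1) ≤ 1 - (k : ℝ) * δ j := by
  have hN2 : (2:ℝ) ≤ N := by exact_mod_cast hN
  have hNne : N ≠ 0 := by omega
  have hc0 : (0:ℝ) < c := by nlinarith
  refine ⟨1/2, one_half_pos, fun ν hν hν2 => ?_⟩
  have hev := hδ0.eventually_lt_const (show (0:ℝ) < 1/(4*c) by positivity)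
  filter_upwards [hev] with j hj k hk1 hk2 s hs
  obtain ⟨hvInt, hv0, hgI, hgN, hg1⟩ := hv j
  obtain ⟨hApos, hA1⟩ := ha j
  obtain ⟨hD0, hD1⟩ := hδ j
  set A := a j with hAdef
  set D := δ j with hDdef
  set K : ℝ := (k:ℝ) with hKdef
  have hK1 : (1:ℝ) ≤ K := by rw [hKdef]; exact_mod_cast hk1
  have hcD : c * D < 1/4 := by
    calc c * D < c * (1/(4*c)) := mul_lt_mul_of_pos_left hj hc0
      _ = 1/4 := by field_simp
  have hcD0 : 0 < c * D := by positivity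
  have hKcD : K * c * D < 1/2 := by
    have h := Nat.lt_ceil.mp hk2
    have h2 : K * (c*D) < ν := by
      calc K * (c*D) < (ν / (c*D)) * (c*D) := mul_lt_mul_of_pos_right h hcD0
        _ = ν := by field_simp
    calc K * c * D = K * (c*D) := by ring
      _ < ν := h2
      _ ≤ 1/2 := hν2
  have hc9 : (9:ℝ) ≤ c := by nlinarith only [hc, hN2]
  have hDhalf : D ≤ 1/2 := by nlinarith only [hc9, hcD, hD0]
  have h1 : 0 < 1 - (K+1)*c*D := by linarith only [hKcD, hcD]
  have hspos : 0 < s := lt_of_lt_of_le (mul_pos hApos h1) hs.1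
  have hKcD0 : 0 < K*c*D := by positivity
  have hKcDA : 0 < A * (K*c*D) := mul_pos hApos hKcD0
  have hsA : s < A := by
    refine lt_of_le_of_lt hs.2 ?_
    linarith only [hKcDA]
  have hsle1 : s ≤ 1 := le_trans hsA.le hA1
  by_contra hcon
  push_neg at hcon
  -- basic function values
  have hvs : v j s = ∫ x in Set.Ioc (0:ℝ) s, g j x := by
    rw [hvInt s ⟨hspos.le, hsle1⟩, intervalIntegral.integral_of_le hspos.le]
  -- integrability on subintervals
  have hsub0s : Set.uIcc (0:ℝ) s ⊆ Set.uIcc (0:ℝ) 1 := by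
    rw [Set.uIcc_of_le hspos.le, Set.uIcc_of_le zero_le_one]
    exact Set.Icc_subset_Icc le_rfl hsle1
  have hsub0A : Set.uIcc (0:ℝ) A ⊆ Set.uIcc (0:ℝ) 1 := by
    rw [Set.uIcc_of_le hApos.le, Set.uIcc_of_le zero_le_one]
    exact Set.Icc_subset_Icc le_rfl hA1
  have hgI0s : IntervalIntegrable (g j) volume 0 s := hgI.mono_set hsub0s
  have hgI0A : IntervalIntegrable (g j) volume 0 A := hgI.mono_set hsub0A
  have hgNs : MeasureTheory.IntegrableOn (fun t => |g j t| ^ N) (Set.Ioc 0 s) :=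
    hgN.mono_set (Set.Ioc_subset_Ioc le_rfl hsle1)
  have hgNsA : MeasureTheory.IntegrableOn (fun t => |g j t| ^ N) (Set.Ioc s A) :=
    hgN.mono_set (Set.Ioc_subset_Ioc hspos.le hA1)
  set I0 := ∫ x in Set.Ioc (0:ℝ) s, |g j x| ^ N with hI0def
  set I1 := ∫ x in Set.Ioc s A, |g j x| ^ N with hI1def
  -- Hölder on (0,s]
  have H1 : |v j s| ^ N ≤ I0 * s ^ (N-1) := by
    have h := holder_aux N hN (g j) 0 s hspos.le hgI0s.1 hgNs
    rw [← hvs] at h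
    simpa using h
  have hconm : (1 - K*D) * s^(N-1) < |v j s|^N :=
    (lt_div_iff₀ (pow_pos hspos _)).mp hcon
  have hI0lb : 1 - K*D < I0 := by
    have h2 : (1 - K*D) * s^(N-1) < I0 * s^(N-1) := lt_of_lt_of_le hconm H1
    exact lt_of_mul_lt_mul_right h2 (pow_nonneg hspos.le _)
  -- total mass
  have hunion : (∫ x in Set.Ioc (0:ℝ) A, |g j x| ^ N) = I0 + I1 := by
    rw [← Set.Ioc_union_Ioc_eq_Ioc hspos.le hsA.le,
      MeasureTheory.setIntegral_union (Set.Ioc_disjoint_Ioc_of_le le_rfl) measurableSet_Ioc hgNs hgNsA]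
  have hle1 : (∫ x in Set.Ioc (0:ℝ) A, |g j x| ^ N) ≤ 1 := by
    rw [← hg1]
    apply MeasureTheory.setIntegral_mono_set hgN
    · filter_upwards with x using by positivity
    · exact (Set.Ioc_subset_Ioc le_rfl hA1).eventuallyLE
  have hI1ub : I1 < K*D := by linarith only [hI0lb, hle1, hunion]
  -- Hölder on (s,A]
  have hdiff : v j A - v j s = ∫ x in Set.Ioc s A, g j x := by
    rw [hvInt A ⟨hApos.le, hA1⟩, hvInt s ⟨hspos.le, hsle1⟩,
      intervalIntegral.integral_interval_sub_left hgI0A hgI0s,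
      intervalIntegral.integral_of_le hsA.le]
  have hRN : |v j A - v j s| ^ N ≤ K*D * (A-s)^(N-1) := by
    have h := holder_aux N hN (g j) s A hsA.le (hgI.mono_set (by
      rw [Set.uIcc_of_le hsA.le, Set.uIcc_of_le zero_le_one]
      exact Set.Icc_subset_Icc hspos.le hA1)).1 hgNsA
    rw [← hdiff] at h
    refine le_trans h ?_
    apply mul_le_mul_of_nonneg_right hI1ub.le
    have : (0:ℝ) ≤ A - s := by linarith
    positivity
  -- pointwise bounds at s and A
  have hPN : |v j A| ^ N = (1-D) * A^(N-1) := by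
    have h := heq j
    rwa [div_eq_iff (ne_of_gt (pow_pos hApos (N-1)))] at h
  have hQN : |v j s| ^ N ≤ (1-D) * s^(N-1) := by
    have h := hmax j s ⟨hspos, hsle1⟩
    rwa [div_le_iff₀ (pow_pos hspos _)] at h
  -- rpow setup
  set θ : ℝ := 1 - 1/(N:ℝ) with hθdef
  have hNpos : (0:ℝ) < N := by linarith
  have hθ0 : 0 ≤ θ := by
    rw [hθdef, sub_nonneg, div_le_one hNpos]; linarith
  have hθ1 : θ ≤ 1 := by
    rw [hθdef]
    have : 0 < 1/(N:ℝ) := by positivity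
    linarith
  have hθNat : θ * (N:ℝ) = ((N-1:ℕ):ℝ) := by
    have hcast : ((N-1:ℕ):ℝ) = (N:ℝ) - 1 := by
      have h1 : (1:ℕ) ≤ N := by omega
      push_cast [h1]; ring
    rw [hcast, hθdef]
    field_simp
  have key : ∀ x : ℝ, 0 ≤ x → (x ^ θ)^N = x ^ (N-1) := by
    intro x hx
    rw [← Real.rpow_natCast (x ^ θ) N, ← Real.rpow_mul hx, hθNat, Real.rpow_natCast]
  set u : ℝ := (1-D) ^ (1/(N:ℝ)) with hudef
  set w : ℝ := (K*D) ^ (1/(N:ℝ)) with hwdef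
  have h1D0 : (0:ℝ) ≤ 1 - D := by linarith
  have hu0 : 0 ≤ u := Real.rpow_nonneg h1D0 _
  have hKD0 : (0:ℝ) < K*D := by positivity
  have hw0 : 0 ≤ w := Real.rpow_nonneg hKD0.le _
  have uN : u^N = 1-D := by
    rw [hudef, ← Real.rpow_natCast _ N, ← Real.rpow_mul h1D0, one_div,
      inv_mul_cancel₀ (ne_of_gt hNpos), Real.rpow_one]
  have wN : w^N = K*D := by
    rw [hwdef, ← Real.rpow_natCast _ N, ← Real.rpow_mul hKD0.le, one_div,
      inv_mul_cancel₀ (ne_of_gt hNpos), Real.rpow_one]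
  have hP : u * A ^ θ ≤ |v j A| := by
    apply le_of_pow_le_pow_left₀ hNne (abs_nonneg _)
    rw [mul_pow, uN, key A hApos.le, hPN]
  have hQ : |v j s| ≤ u * s ^ θ := by
    apply le_of_pow_le_pow_left₀ hNne (by positivity)
    rw [mul_pow, uN, key s hspos.le]
    exact hQN
  have hR : |v j A - v j s| ≤ w * (A-s) ^ θ := by
    apply le_of_pow_le_pow_left₀ hNne
      (mul_nonneg hw0 (Real.rpow_nonneg (by linarith) _))
    rw [mul_pow, wN, key (A-s) (by linarith)]
    exact hRN
  have htri : |v j A| ≤ |v j s| + |v j A - v j s| := by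
    calc |v j A| = |v j s + (v j A - v j s)| := by ring_nf
      _ ≤ |v j s| + |v j A - v j s| := abs_add_le _ _
  have chain : u * A^θ ≤ u * s^θ + w * (A-s)^θ := by
    calc u * A^θ ≤ |v j A| := hP
      _ ≤ |v j s| + |v j A - v j s| := htri
      _ ≤ u * s^θ + w * (A-s)^θ := add_le_add hQ hR
  -- Bernoulli step
  set r : ℝ := (A - s)/A with hrdef
  have hr0 : 0 < r := div_pos (by linarith) hApos
  have hrKcD : K*c*D ≤ r := by
    rw [hrdef, le_div_iff₀ hApos]
    linarith only [hs.2]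
  have hbern : s ^ θ ≤ A^θ * (1 - θ * r) := by
    have hm1 : (-1:ℝ) ≤ s/A - 1 := by
      have : 0 ≤ s/A := by positivity
      linarith
    have h := rpow_one_add_le_one_add_mul_self hm1 hθ0 hθ1
    have e : (1 : ℝ) + (s/A - 1) = s/A := by ring
    rw [e] at h
    have e2 : s/A - 1 = -r := by
      rw [hrdef]
      field_simp
      ring
    rw [e2] at h
    have e3 : (s/A)^θ * A^θ = s^θ := by
      rw [← Real.mul_rpow (by positivity) hApos.le]
      congr 1
      field_simp
    calc s^θ = (s/A)^θ * A^θ := e3.symm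
      _ ≤ (1 + θ * (-r)) * A^θ :=
          mul_le_mul_of_nonneg_right h (Real.rpow_nonneg hApos.le _)
      _ = A^θ * (1 - θ * r) := by ring
  have hAθ : 0 < A^θ := Real.rpow_pos_of_pos hApos θ
  have c1 : u * s^θ ≤ u * (A^θ * (1 - θ*r)) := mul_le_mul_of_nonneg_left hbern hu0
  have c3 : (u * (θ*r)) * A^θ ≤ w * (A-s)^θ := by linarith only [chain, c1]
  have e3 : A - s = r * A := by
    rw [hrdef]; field_simp
  have e4 : (A-s)^θ = r^θ * A^θ := by
    rw [e3, Real.mul_rpow hr0.le hApos.le]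
  have c5 : u * (θ*r) ≤ w * r^θ := by
    rw [e4] at c3
    have hid : w * (r^θ * A^θ) = (w * r^θ) * A^θ := by ring
    rw [hid] at c3
    exact le_of_mul_le_mul_right c3 hAθ
  have c6 : (u * (θ*r))^N ≤ (w * r^θ)^N :=
    pow_le_pow_left₀ (by positivity) c5 N
  have rsplit : r^N = r^(N-1) * r := by
    rw [← pow_succ]
    congr 1
    omega
  have c7 : (1-D) * θ^N * (r^(N-1) * r) ≤ K*D * r^(N-1) := by
    have hl : (u * (θ*r))^N = (1-D) * θ^N * (r^(N-1) * r) := by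
      rw [mul_pow, mul_pow, uN, rsplit]
      ring
    have hr' : (w * r^θ)^N = K*D * r^(N-1) := by
      rw [mul_pow, wN, key r hr0.le]
    rw [hl, hr'] at c6
    exact c6
  have c8 : (1-D) * θ^N * r ≤ K*D := by
    have hrp : 0 < r^(N-1) := pow_pos hr0 _
    have h' : ((1-D) * θ^N * r) * r^(N-1) ≤ (K*D) * r^(N-1) := by
      calc ((1-D) * θ^N * r) * r^(N-1) = (1-D) * θ^N * (r^(N-1) * r) := by ring
        _ ≤ K*D * r^(N-1) := c7
    exact le_of_mul_le_mul_right h' hrp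
  have hfin : (1-D) * θ^N * (K*c*D) ≤ K*D := by
    refine le_trans ?_ c8
    apply mul_le_mul_of_nonneg_left hrKcD
    positivity
  have hle : (1-D) * θ^N * c ≤ 1 := by
    have h' : ((1-D) * θ^N * c) * (K*D) ≤ 1 * (K*D) := by
      calc ((1-D) * θ^N * c) * (K*D) = (1-D) * θ^N * (K*c*D) := by ring
        _ ≤ K*D := hfin
        _ = 1 * (K*D) := by ring
    exact le_of_mul_le_mul_right h' hKD0
  have hcontr := theta_bound N hN D hDhalf c hc
  rw [hθdef] at hle
  linarith only [hcontr, hle]
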